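/- arXiv:2203.13820 — 2 statements merged into one kernel-verified Lean document; each statement's English description precedes it below -/
import Mathlib

section
/- Let B be a standard Brownian motion on [0,T] and (π^n) a sequence of partitions of [0,T] with |π^n| log n → 0. Then almost surely, for all t ∈ [0,T], the sums Σ_{π^n ∩ [0,t]} (B(t^n_{i+1}) - B(t^n_i))^2 converge to t; that is, B has quadratic variation [B]^{(2)}_π(t) = t along π almost surely. -/
open Filter Finset Set MeasureTheory ProbabilityTheory

/-- A standard Brownian motion (Wiener process) on a probability space: continuous paths started
at `0`, with independent Gaussian increments of variance equal to the time increment. -/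
def IsBrownianMotion {Ω : Type*} [MeasureSpace Ω] (B : ℝ → Ω → ℝ) : Prop :=
  IsProbabilityMeasure (ℙ : Measure Ω) ∧
  (∀ s, Measurable (B s)) ∧
  (∀ ω, Continuous fun s => B s ω) ∧
  (∀ ω, B 0 ω = 0) ∧
  (∀ s u : ℝ, 0 ≤ s → s ≤ u →
    Measure.map (fun ω => B u ω - B s ω) ℙ = gaussianReal 0 (Real.toNNReal (u - s))) ∧
  (∀ (m : ℕ) (s : ℕ → ℝ), Monotone s → (∀ i, 0 ≤ s i) →
    iIndepFun
      (fun (i : Fin m) ω => B (s (i.1 + 1)) ω - B (s i.1) ω) ℙ)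

open Real NNReal ENNReal



lemma qv_log_ineq {u : ℝ} (hu : u ≤ 1/2) :
    (Real.sqrt (1 - u))⁻¹ ≤ Real.exp (u/2 + u^2) := by
  have h1 : (0:ℝ) < 1 - u := by linarith
  have h2 : Real.exp (u/2 + u^2) = Real.sqrt (Real.exp (u + 2*u^2)) := by
    rw [← Real.exp_half]; ring_nf
  rw [h2, ← Real.sqrt_inv]
  apply Real.sqrt_le_sqrt
  rw [inv_le_iff_one_le_mul₀ h1]
  have h3 := Real.add_one_le_exp (u + 2*u^2)
  nlinarith [sq_nonneg u, sq_nonneg (u*(1-2*u))]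


lemma qv_gauss_aux (v : NNReal) (hv : v ≠ 0) {c : ℝ} (h : 2 * c * v < 1) :
    (∀ x : ℝ, (Real.toNNReal (gaussianPDFReal 0 v x)) • Real.exp (c * x ^ 2)
      = (Real.sqrt (2 * π * v))⁻¹ * Real.exp (-((1 - 2*c*v) / (2*v)) * x ^ 2)) := by
  intro x
  have hvr : (0:ℝ) < v := lt_of_le_of_ne v.coe_nonneg (by exact_mod_cast (Ne.symm hv))
  rw [NNReal.smul_def, Real.coe_toNNReal _ (gaussianPDFReal_nonneg 0 v x), gaussianPDFReal]
  rw [smul_eq_mul, mul_assoc, ← Real.exp_add]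
  congr 2
  field_simp
  ring

lemma qv_b_pos (v : NNReal) (hv : v ≠ 0) {c : ℝ} (h : 2 * c * v < 1) :
    0 < (1 - 2*c*(v:ℝ)) / (2*(v:ℝ)) := by
  have hvr : (0:ℝ) < v := lt_of_le_of_ne v.coe_nonneg (by exact_mod_cast (Ne.symm hv))
  apply div_pos (by linarith) (by linarith)

lemma qv_pdf_coe (v : NNReal) : gaussianPDF 0 v
    = fun x => ((Real.toNNReal (gaussianPDFReal 0 v x) : NNReal) : ENNReal) := rfl

lemma qv_pdf_meas (v : NNReal) : Measurable fun x => Real.toNNReal (gaussianPDFReal 0 v x) :=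
  (measurable_gaussianPDFReal 0 v).real_toNNReal

lemma qv_integrable_exp_sq_gaussian (v : ℝ≥0) {c : ℝ} (h : 2 * c * v < 1) :
    Integrable (fun x => Real.exp (c * x ^ 2)) (gaussianReal 0 v) := by
  rcases eq_or_ne v 0 with hv | hv
  · subst hv
    rw [gaussianReal_zero_var]
    constructor
    · exact (by fun_prop : Measurable fun x : ℝ => Real.exp (c * x ^ 2)).aestronglyMeasurable
    · rw [HasFiniteIntegral]
      rw [lintegral_dirac' _ (by fun_prop)]
      exact ENNReal.coe_lt_top
  · rw [gaussianReal_of_var_ne_zero 0 hv, qv_pdf_coe]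
    rw [integrable_withDensity_iff_integrable_smul (qv_pdf_meas v)]
    apply Integrable.congr
      (((integrable_exp_neg_mul_sq (qv_b_pos v hv h)).const_mul (Real.sqrt (2 * π * v))⁻¹))
    filter_upwards with x
    exact (qv_gauss_aux v hv h x).symm

lemma qv_integral_exp_sq_gaussian (v : ℝ≥0) {c : ℝ} (h : 2 * c * v < 1) :
    ∫ x, Real.exp (c * x ^ 2) ∂(gaussianReal 0 v) = (Real.sqrt (1 - 2 * c * v))⁻¹ := by
  rcases eq_or_ne v 0 with hv | hv
  · subst hv
    rw [gaussianReal_zero_var, integral_dirac]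
    norm_num
  · have hvr : (0:ℝ) < v := lt_of_le_of_ne v.coe_nonneg (by exact_mod_cast (Ne.symm hv))
    rw [gaussianReal_of_var_ne_zero 0 hv, qv_pdf_coe,
      integral_withDensity_eq_integral_smul (qv_pdf_meas v)]
    simp only [qv_gauss_aux v hv h]
    rw [integral_const_mul, integral_gaussian]
    have h2 : π / ((1 - 2*c*(v:ℝ)) / (2*(v:ℝ))) = (2 * π * v) * (1 - 2*c*(v:ℝ))⁻¹ := by
      field_simp
    rw [h2, Real.sqrt_mul (show (0:ℝ) ≤ 2*π*(v:ℝ) by positivity) ((1 - 2*c*(v:ℝ))⁻¹), Real.sqrt_inv]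
    have h3 : Real.sqrt (2 * π * v) ≠ 0 := by
      refine ne_of_gt (Real.sqrt_pos.2 (by positivity))
    field_simp

lemma qv_mgf_bound (v : NNReal) {c : ℝ} (h : c * v ≤ 1/4) :
    ∫ x, Real.exp (c * x ^ 2) ∂(gaussianReal 0 v) ≤ Real.exp (c * v + 4 * c^2 * (v:ℝ)^2) := by
  have h2 : 2 * c * v < 1 := by nlinarith [v.coe_nonneg]
  rw [qv_integral_exp_sq_gaussian v h2]
  have h3 := qv_log_ineq (u := 2*c*v) (by linarith)
  calc (Real.sqrt (1 - 2 * c * v))⁻¹ ≤ Real.exp ((2*c*v)/2 + (2*c*v)^2) := h3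
    _ = Real.exp (c * v + 4 * c^2 * (v:ℝ)^2) := by ring_nf

lemma qv_mgf_sq {Ω : Type*} [MeasureSpace Ω] {X : Ω → ℝ} (hX : Measurable X) {w : NNReal}
    (hlaw : Measure.map X ℙ = gaussianReal 0 w) (c : ℝ) :
    mgf (fun ω => X ω ^ 2) ℙ c = ∫ x, Real.exp (c * x ^ 2) ∂(gaussianReal 0 w) := by
  rw [mgf, ← hlaw, integral_map hX.aemeasurable (by measurability)]

lemma qv_integrable_sq {Ω : Type*} [MeasureSpace Ω] {X : Ω → ℝ} (hX : Measurable X) {w : NNReal}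
    (hlaw : Measure.map X ℙ = gaussianReal 0 w) {c : ℝ} (h2 : 2 * c * w < 1) :
    Integrable (fun ω => Real.exp (c * X ω ^ 2)) ℙ := by
  have h3 := qv_integrable_exp_sq_gaussian w h2
  rw [← hlaw] at h3
  exact (integrable_map_measure
    ((measurable_const.mul (measurable_id.pow_const 2)).exp.aestronglyMeasurable)
    hX.aemeasurable).mp h3



lemma qv_tau_mono (M : ℕ) (τ : ℕ → ℝ) (hmono : ∀ i < M, τ i < τ (i+1)) :
    ∀ j, j ≤ M → ∀ i, i ≤ j → τ i ≤ τ j := by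
  intro j
  induction j with
  | zero => intro _ i hi; interval_cases i; exact le_rfl
  | succ k ih =>
    intro hk i hi
    rcases Nat.eq_or_lt_of_le hi with rfl | h
    · exact le_rfl
    · exact le_trans (ih (by omega) i (by omega)) (le_of_lt (hmono k (by omega)))

lemma qv_K (M : ℕ) (τ : ℕ → ℝ) (hM : 0 < M) (hτ0 : τ 0 = 0)
    (hmono : ∀ i < M, τ i < τ (i+1)) (T : ℝ) (hτT : τ M = T)
    (q : ℝ) (hq0 : 0 ≤ q) (hqT : q ≤ T) :
    ∃ K, 0 < K ∧ K ≤ M ∧ (∀ i, i < M → (τ i ≤ q ↔ i < K)) ∧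
      q ≤ τ K ∧ τ (K-1) ≤ q ∧ K - 1 < M := by
  have hex : ∃ i, M ≤ i ∨ q < τ i := ⟨M, Or.inl le_rfl⟩
  set K := Nat.find hex with hK
  have hspec : M ≤ K ∨ q < τ K := Nat.find_spec hex
  have hmin : ∀ i, i < K → ¬(M ≤ i ∨ q < τ i) := fun i hi => Nat.find_min hex hi
  have hKM : K ≤ M := Nat.find_min' hex (Or.inl le_rfl)
  have hKpos : 0 < K := by
    rcases Nat.eq_zero_or_pos K with h0 | h
    · rw [h0] at hspec
      rcases hspec with h | h
      · omega
      · rw [hτ0] at h; linarith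
    · exact h
  have hlt : ∀ i, i < K → i < M ∧ τ i ≤ q := by
    intro i hi
    have := hmin i hi
    push_neg at this
    exact ⟨by omega, this.2⟩
  have hgt : ∀ i, i < M → K ≤ i → q < τ i := by
    intro i hiM hKi
    rcases hspec with h | h
    · omega
    · exact lt_of_lt_of_le h (qv_tau_mono M τ hmono i (by omega) K hKi)
  refine ⟨K, hKpos, hKM, fun i hiM => ⟨fun hle => ?_, fun hiK => (hlt i hiK).2⟩, ?_, ?_, ?_⟩
  · by_contra hc
    exact absurd hle (not_le.mpr (hgt i hiM (by omega)))
  · rcases hspec with h | h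
    · have : K = M := le_antisymm hKM h
      rw [this, hτT]; exact hqT
    · exact le_of_lt h
  · exact (hlt (K-1) (by omega)).2
  · exact (hlt (K-1) (by omega)).1

open scoped Classical in
lemma qv_filter_lt (M K : ℕ) (h : K ≤ M) :
    Finset.filter (fun i => i < K) (Finset.range M) = Finset.range K := by
  ext i; simp only [Finset.mem_filter, Finset.mem_range]; omega

open scoped Classical in
lemma qvC_bounds (M : ℕ) (τ : ℕ → ℝ) (hM : 0 < M) (hτ0 : τ 0 = 0)
    (hmono : ∀ i < M, τ i < τ (i+1)) (T : ℝ) (hτT : τ M = T)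
    (q : ℝ) (hq0 : 0 ≤ q) (hqT : q ≤ T)
    (δ : ℝ) (hδ : ∀ i < M, τ (i+1) - τ i ≤ δ) :
    q ≤ (∑ i ∈ Finset.range M, if τ i ≤ q then (τ (i+1) - τ i) else 0) ∧
    (∑ i ∈ Finset.range M, if τ i ≤ q then (τ (i+1) - τ i) else 0) ≤ q + δ := by
  obtain ⟨K, hKpos, hKM, hiff, hqK, hK1q, hK1M⟩ :=
    qv_K M τ hM hτ0 hmono T hτT q hq0 hqT
  have hsum : (∑ i ∈ Finset.range M, if τ i ≤ q then (τ (i+1) - τ i) else 0) = τ K := by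
    have h1 : (∑ i ∈ Finset.range M, if τ i ≤ q then (τ (i+1) - τ i) else 0)
        = ∑ i ∈ Finset.range M, if i < K then (τ (i+1) - τ i) else 0 := by
      apply Finset.sum_congr rfl
      intro i hi
      rw [Finset.mem_range] at hi
      by_cases h : i < K
      · rw [if_pos ((hiff i hi).mpr h), if_pos h]
      · rw [if_neg (fun hc => h ((hiff i hi).mp hc)), if_neg h]
    rw [h1, ← Finset.sum_filter, qv_filter_lt M K hKM,
      Finset.sum_range_sub (fun i => τ i), hτ0, sub_zero]
  rw [hsum]
  constructor
  · exact hqK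
  · have hKsub : K = (K - 1) + 1 := by omega
    have := hδ (K-1) hK1M
    rw [hKsub]
    linarith

lemma qv_tail {Ω : Type*} [MeasureSpace Ω] (B : ℝ → Ω → ℝ) (hB : IsBrownianMotion B)
    (T : ℝ) (hT : 0 < T) (M : ℕ) (τ : ℕ → ℝ) (hM : 0 < M) (hτ0 : τ 0 = 0) (hτT : τ M = T)
    (hmono : ∀ i < M, τ i < τ (i+1)) (δ : ℝ) (hδpos : 0 < δ)
    (hδ : ∀ i < M, τ (i+1) - τ i ≤ δ) (q : ℝ)
    (ε : ℝ) (hε : 0 < ε) (hεT : ε ≤ 2 * T) :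
    (ℙ : Measure Ω) {ω | ε ≤ |(∑ i ∈ Finset.range M,
            if τ i ≤ q then (B (τ (i+1)) ω - B (τ i) ω)^2 else 0)
        - (∑ i ∈ Finset.range M, if τ i ≤ q then (τ (i+1) - τ i) else 0)|}
      ≤ ENNReal.ofReal (2 * Real.exp (-ε^2 / (16 * δ * T))) := by
  haveI hP : IsProbabilityMeasure (ℙ : Measure Ω) := hB.1
  obtain ⟨-, hBmeas, -, -, hlaw, hindep⟩ := hB
  have hτnn : ∀ i, i ≤ M → 0 ≤ τ i := fun i hi => by
    rw [← hτ0]; exact qv_tau_mono M τ hmono i hi 0 (Nat.zero_le _)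
  -- independence of increments
  set σ : ℕ → ℝ := fun i => τ (min i M) with hσ
  have hσmono : Monotone σ := fun a b hab =>
    qv_tau_mono M τ hmono (min b M) (min_le_right _ _) (min a M) (by omega)
  have hσnn : ∀ i, 0 ≤ σ i := fun i => hτnn _ (min_le_right _ _)
  have hind0 := hindep M σ hσmono hσnn
  set X : Fin M → Ω → ℝ := fun i ω => B (τ (i.1+1)) ω - B (τ i.1) ω with hX
  have hXeq : (fun (i : Fin M) ω => B (σ (i.1 + 1)) ω - B (σ i.1) ω) = X := by
    funext i ω
    have h1 : min (i.1+1) M = i.1+1 := by have := i.2; omega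
    have h2 : min i.1 M = i.1 := by have := i.2; omega
    simp only [hσ, h1, h2, hX]
  rw [hXeq] at hind0
  have hXmeas : ∀ i, Measurable (X i) := fun i => (hBmeas _).sub (hBmeas _)
  have hXlaw : ∀ i : Fin M,
      Measure.map (X i) ℙ = gaussianReal 0 (Real.toNNReal (τ (i.1+1) - τ i.1)) := fun i =>
    hlaw (τ i.1) (τ (i.1+1)) (hτnn i.1 (le_of_lt i.2)) (le_of_lt (hmono i.1 i.2))
  set Δ : ℕ → ℝ := fun i => τ (i+1) - τ i with hΔ
  have hΔpos : ∀ i < M, 0 < Δ i := fun i hi => sub_pos.mpr (hmono i hi)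
  have hw : ∀ i : Fin M, ((Real.toNNReal (Δ i.1) : ℝ)) = Δ i.1 := fun i =>
    Real.coe_toNNReal _ (le_of_lt (hΔpos i.1 i.2))
  set d : Fin M → ℝ := fun i => if τ i.1 ≤ q then Δ i.1 else 0 with hd
  have hdnn : ∀ i : Fin M, 0 ≤ d i := fun i => by
    rw [hd]; dsimp only; split_ifs with h
    · exact (hΔpos i.1 i.2).le
    · exact le_rfl
  have hdδ : ∀ i : Fin M, d i ≤ δ := fun i => by
    rw [hd]; dsimp only; split_ifs with h
    · exact hδ i.1 i.2
    · exact hδpos.le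
  set g : Fin M → ℝ → ℝ := fun i x => if τ i.1 ≤ q then x^2 else 0 with hg
  have hgmeas : ∀ i : Fin M, Measurable (g i) := by
    intro i; rw [hg]; dsimp only; split_ifs with h
    · exact measurable_id.pow_const 2
    · exact measurable_const
  set Y : Fin M → Ω → ℝ := fun i => (g i) ∘ (X i) with hY
  have hYmeas : ∀ i, Measurable (Y i) := fun i => (hgmeas i).comp (hXmeas i)
  have hindY : iIndepFun Y ℙ :=
    hind0.comp g hgmeas
  -- per-index mgf bounds and integrability
  have key : ∀ c : ℝ, (∀ i < M, c * Δ i ≤ 1/4) →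
      (∀ i : Fin M, mgf (Y i) ℙ c ≤ Real.exp (c * d i + 4 * c^2 * (d i)^2)) ∧
      (∀ i : Fin M, Integrable (fun ω => Real.exp (c * Y i ω)) ℙ) := by
    intro c hc
    constructor <;> intro i <;> by_cases h : τ i.1 ≤ q
    · have hYi : Y i = fun ω => (X i ω)^2 := by
        funext ω; simp only [hY, hg, Function.comp_apply, if_pos h]
      have hdi : d i = Δ i.1 := by rw [hd]; exact if_pos h
      have hc1 : c * ((Real.toNNReal (Δ i.1) : ℝ)) ≤ 1/4 := by
        rw [hw i]; exact hc i.1 i.2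
      rw [hYi, hdi]
      calc mgf (fun ω => (X i ω)^2) ℙ c
          = ∫ x, Real.exp (c * x ^ 2) ∂(gaussianReal 0 (Real.toNNReal (Δ i.1))) :=
            qv_mgf_sq (hXmeas i) (hXlaw i) c
        _ ≤ Real.exp (c * (Real.toNNReal (Δ i.1) : ℝ)
              + 4 * c^2 * ((Real.toNNReal (Δ i.1) : ℝ))^2) := qv_mgf_bound _ hc1
        _ = Real.exp (c * Δ i.1 + 4 * c^2 * (Δ i.1)^2) := by rw [hw i]
    · have hYi : Y i = fun _ => (0:ℝ) := by
        funext ω; simp only [hY, hg, Function.comp_apply, if_neg h]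
      have hdi : d i = 0 := by rw [hd]; exact if_neg h
      rw [hYi, hdi, mgf_const]
      simp
    · have hYi : Y i = fun ω => (X i ω)^2 := by
        funext ω; simp only [hY, hg, Function.comp_apply, if_pos h]
      have h2 : 2 * c * ((Real.toNNReal (Δ i.1) : ℝ)) < 1 := by
        rw [hw i]
        have h5 := hc i.1 i.2
        calc 2 * c * Δ i.1 = 2 * (c * Δ i.1) := by ring
          _ ≤ 2 * (1/4) := mul_le_mul_of_nonneg_left h5 (by norm_num)
          _ < 1 := by norm_num
      rw [hYi]
      exact qv_integrable_sq (hXmeas i) (hXlaw i) h2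
    · have hYi : Y i = fun _ => (0:ℝ) := by
        funext ω; simp only [hY, hg, Function.comp_apply, if_neg h]
      rw [hYi]
      simpa using integrable_const (Real.exp (c * 0))
  -- sums
  set C : ℝ := ∑ i : Fin M, d i with hC
  have hsumΔ : ∑ i : Fin M, Δ i.1 = T := by
    rw [Fin.sum_univ_eq_sum_range (fun i => Δ i), hΔ]
    rw [Finset.sum_range_sub (fun i => τ i), hτ0, hτT, sub_zero]
  have hCle : C ≤ T := by
    rw [hC, ← hsumΔ]
    apply Finset.sum_le_sum
    intro i _
    rw [hd]; dsimp only; split_ifs with h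
    · exact le_rfl
    · exact (hΔpos i.1 i.2).le
  have hCnn : 0 ≤ C := Finset.sum_nonneg (fun i _ => hdnn i)
  have hdsq : ∑ i : Fin M, (d i)^2 ≤ δ * T := by
    calc ∑ i : Fin M, (d i)^2 ≤ ∑ i : Fin M, δ * d i := by
          apply Finset.sum_le_sum
          intro i _
          have := hdnn i; have := hdδ i
          nlinarith
      _ = δ * C := by rw [hC, Finset.mul_sum]
      _ ≤ δ * T := by nlinarith
  -- mgf of the sum
  have hmgfS : ∀ c : ℝ, (∀ i < M, c * Δ i ≤ 1/4) →
      mgf (∑ i : Fin M, Y i) ℙ c ≤ Real.exp (c * C + 4 * c^2 * (δ * T)) := by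
    intro c hc
    rw [hindY.mgf_sum hYmeas Finset.univ]
    calc ∏ i : Fin M, mgf (Y i) ℙ c
        ≤ ∏ i : Fin M, Real.exp (c * d i + 4 * c^2 * (d i)^2) :=
          Finset.prod_le_prod (fun i _ => mgf_nonneg) (fun i _ => ((key c hc).1 i))
      _ = Real.exp (∑ i : Fin M, (c * d i + 4 * c^2 * (d i)^2)) := (Real.exp_sum _ _).symm
      _ ≤ Real.exp (c * C + 4 * c^2 * (δ * T)) := by
          apply Real.exp_le_exp.mpr
          rw [Finset.sum_add_distrib, ← Finset.mul_sum, ← Finset.mul_sum, ← hC]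
          have h4 : 4 * c^2 * ∑ i : Fin M, (d i)^2 ≤ 4 * c^2 * (δ * T) := by
            apply mul_le_mul_of_nonneg_left hdsq (by positivity)
          linarith
  have hintS : ∀ c : ℝ, (∀ i < M, c * Δ i ≤ 1/4) →
      Integrable (fun ω => Real.exp (c * (∑ i : Fin M, Y i) ω)) ℙ := fun c hc =>
    hindY.integrable_exp_mul_sum hYmeas (fun i _ => (key c hc).2 i)
  -- Chernoff
  set lam : ℝ := ε / (8 * δ * T) with hlam
  have hlampos : 0 < lam := by rw [hlam]; positivity
  have hlamδ : ∀ i < M, lam * Δ i ≤ 1/4 := by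
    intro i hi
    have h1 : lam * Δ i ≤ lam * δ := mul_le_mul_of_nonneg_left (hδ i hi) hlampos.le
    have h2 : lam * δ = ε / (8 * T) := by rw [hlam]; field_simp
    rw [h2] at h1
    have h3 : ε / (8 * T) ≤ 1/4 := by rw [div_le_iff₀ (by linarith)]; linarith
    linarith
  have hlamneg : ∀ i < M, (-lam) * Δ i ≤ 1/4 := by
    intro i hi
    have h1 : 0 < lam * Δ i := mul_pos hlampos (hΔpos i hi)
    calc (-lam) * Δ i = -(lam * Δ i) := by ring
      _ ≤ 0 := neg_nonpos.mpr h1.le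
      _ ≤ 1/4 := by norm_num
  have hexpval : -lam * ε + (lam * C + 4 * lam^2 * (δ * T)) - lam * C = -ε^2 / (16 * δ * T) := by
    rw [hlam]; field_simp; ring
  have hQ : ∀ ω : Ω, (∑ i : Fin M, Y i) ω
      = ∑ i ∈ Finset.range M, if τ i ≤ q then (B (τ (i+1)) ω - B (τ i) ω)^2 else 0 := by
    intro ω
    rw [Finset.sum_apply]
    rw [← Fin.sum_univ_eq_sum_range (fun i => if τ i ≤ q then (B (τ (i+1)) ω - B (τ i) ω)^2 else 0) M]
    apply Finset.sum_congr rfl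
    intro i _
    simp only [hY, hg, hX, Function.comp_apply]
  have hCsum : C = ∑ i ∈ Finset.range M, if τ i ≤ q then (τ (i+1) - τ i) else 0 := by
    rw [hC, ← Fin.sum_univ_eq_sum_range (fun i => if τ i ≤ q then (τ (i+1) - τ i) else 0) M]
  -- upper tail
  have hup : ((ℙ : Measure Ω) {ω | C + ε ≤ (∑ i : Fin M, Y i) ω}).toReal
      ≤ Real.exp (-ε^2 / (16 * δ * T)) := by
    calc ((ℙ : Measure Ω) {ω | C + ε ≤ (∑ i : Fin M, Y i) ω}).toReal
        ≤ Real.exp (-lam * (C + ε)) * mgf (∑ i : Fin M, Y i) ℙ lam :=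
          measure_ge_le_exp_mul_mgf (C + ε) hlampos.le (hintS lam hlamδ)
      _ ≤ Real.exp (-lam * (C + ε)) * Real.exp (lam * C + 4 * lam^2 * (δ * T)) := by
          apply mul_le_mul_of_nonneg_left (hmgfS lam hlamδ) (Real.exp_nonneg _)
      _ = Real.exp (-ε^2 / (16 * δ * T)) := by
          rw [← Real.exp_add, ← hexpval]; ring_nf
  have hlow : ((ℙ : Measure Ω) {ω | (∑ i : Fin M, Y i) ω ≤ C - ε}).toReal
      ≤ Real.exp (-ε^2 / (16 * δ * T)) := by
    calc ((ℙ : Measure Ω) {ω | (∑ i : Fin M, Y i) ω ≤ C - ε}).toReal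
        ≤ Real.exp (-(-lam) * (C - ε)) * mgf (∑ i : Fin M, Y i) ℙ (-lam) :=
          measure_le_le_exp_mul_mgf (C - ε) (neg_nonpos.mpr hlampos.le) (hintS (-lam) hlamneg)
      _ ≤ Real.exp (lam * (C - ε)) * Real.exp ((-lam) * C + 4 * (-lam)^2 * (δ * T)) := by
          rw [neg_neg]
          apply mul_le_mul_of_nonneg_left (hmgfS (-lam) hlamneg) (Real.exp_nonneg _)
      _ = Real.exp (-ε^2 / (16 * δ * T)) := by
          rw [← Real.exp_add, ← hexpval]; ring_nf
  -- combine
  have hsub : {ω : Ω | ε ≤ |(∑ i ∈ Finset.range M,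
            if τ i ≤ q then (B (τ (i+1)) ω - B (τ i) ω)^2 else 0)
        - (∑ i ∈ Finset.range M, if τ i ≤ q then (τ (i+1) - τ i) else 0)|}
      ⊆ {ω | C + ε ≤ (∑ i : Fin M, Y i) ω} ∪ {ω | (∑ i : Fin M, Y i) ω ≤ C - ε} := by
    intro ω hω
    simp only [Set.mem_setOf_eq] at hω
    rw [← hQ ω, ← hCsum] at hω
    rcases le_abs.mp hω with h | h
    · left; simp only [Set.mem_setOf_eq]; linarith
    · right; simp only [Set.mem_setOf_eq]; linarith
  calc (ℙ : Measure Ω) {ω : Ω | ε ≤ |(∑ i ∈ Finset.range M,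
            if τ i ≤ q then (B (τ (i+1)) ω - B (τ i) ω)^2 else 0)
        - (∑ i ∈ Finset.range M, if τ i ≤ q then (τ (i+1) - τ i) else 0)|}
      ≤ (ℙ : Measure Ω) ({ω | C + ε ≤ (∑ i : Fin M, Y i) ω}
          ∪ {ω | (∑ i : Fin M, Y i) ω ≤ C - ε}) := measure_mono hsub
    _ ≤ (ℙ : Measure Ω) {ω | C + ε ≤ (∑ i : Fin M, Y i) ω}
        + (ℙ : Measure Ω) {ω | (∑ i : Fin M, Y i) ω ≤ C - ε} := measure_union_le _ _
    _ ≤ ENNReal.ofReal (Real.exp (-ε^2 / (16 * δ * T)))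
        + ENNReal.ofReal (Real.exp (-ε^2 / (16 * δ * T))) := by
        gcongr
        · exact (ENNReal.le_ofReal_iff_toReal_le (measure_ne_top _ _) (Real.exp_nonneg _)).mpr hup
        · exact (ENNReal.le_ofReal_iff_toReal_le (measure_ne_top _ _) (Real.exp_nonneg _)).mpr hlow
    _ = ENNReal.ofReal (2 * Real.exp (-ε^2 / (16 * δ * T))) := by
        rw [← ENNReal.ofReal_add (Real.exp_nonneg _) (Real.exp_nonneg _)]
        ring_nf

lemma qv_as {Ω : Type*} [MeasureSpace Ω] (B : ℝ → Ω → ℝ) (hB : IsBrownianMotion B)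
    (T : ℝ) (hT : 0 < T) (N : ℕ → ℕ) (t : ℕ → ℕ → ℝ) (hN : ∀ n, 0 < N n)
    (ht0 : ∀ n, t n 0 = 0) (htT : ∀ n, t n (N n) = T)
    (hmono : ∀ n, ∀ i < N n, t n i < t n (i + 1))
    (hmesh : ∀ ε > 0, ∃ M, ∀ n ≥ M, ∀ i < N n, t n (i + 1) - t n i < ε)
    (hmeshlog : Tendsto
      (fun n => (⨆ i : Fin (N n), (t n (i.1 + 1) - t n i.1)) * Real.log n) atTop (nhds 0))
    (q : ℝ) (hq0 : 0 ≤ q) (hqT : q ≤ T) :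
    ∀ᵐ ω ∂(ℙ : Measure Ω), Tendsto (fun n => ∑ i ∈ Finset.range (N n),
      if t n i ≤ q then (B (t n (i + 1)) ω - B (t n i) ω) ^ 2 else 0) atTop (nhds q) := by
  haveI hP : IsProbabilityMeasure (ℙ : Measure Ω) := hB.1
  set δ : ℕ → ℝ := fun n => ⨆ i : Fin (N n), (t n (i.1 + 1) - t n i.1) with hδdef
  have hne : ∀ n, Nonempty (Fin (N n)) := fun n => ⟨⟨0, hN n⟩⟩
  have hδub : ∀ n, ∀ i < N n, t n (i + 1) - t n i ≤ δ n := by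
    intro n i hi
    haveI := hne n
    exact le_ciSup (f := fun i : Fin (N n) => t n (i.1 + 1) - t n i.1)
      (Set.Finite.bddAbove (Set.finite_range _)) (⟨i, hi⟩ : Fin (N n))
  have hδpos : ∀ n, 0 < δ n := fun n =>
    lt_of_lt_of_le (sub_pos.mpr (hmono n 0 (hN n))) (hδub n 0 (hN n))
  set C : ℕ → ℝ := fun n => ∑ i ∈ Finset.range (N n),
      if t n i ≤ q then (t n (i + 1) - t n i) else 0 with hCdef
  have hCb : ∀ n, q ≤ C n ∧ C n ≤ q + δ n := fun n =>
    qvC_bounds (N n) (t n) (hN n) (ht0 n) (hmono n) T (htT n) q hq0 hqT (δ n) (hδub n)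
  have hδ0 : Tendsto δ atTop (nhds 0) := by
    rw [Metric.tendsto_atTop]
    intro ε hε
    obtain ⟨M, hM⟩ := hmesh (ε/2) (by linarith)
    refine ⟨M, fun n hn => ?_⟩
    have h1 : δ n ≤ ε/2 := by
      haveI := hne n
      apply ciSup_le
      intro i
      exact (hM n hn i.1 i.2).le
    rw [Real.dist_eq, sub_zero, abs_of_pos (hδpos n)]
    linarith
  have hC : Tendsto C atTop (nhds q) := by
    have h2 : Tendsto (fun n => q + δ n) atTop (nhds q) := by
      simpa using tendsto_const_nhds.add hδ0
    exact tendsto_of_tendsto_of_tendsto_of_le_of_le tendsto_const_nhds h2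
      (fun n => (hCb n).1) (fun n => (hCb n).2)
  -- Borel–Cantelli for each threshold
  have hBC : ∀ j : ℕ, ∀ᵐ ω ∂(ℙ : Measure Ω), ∀ᶠ n in atTop,
      |(∑ i ∈ Finset.range (N n),
          if t n i ≤ q then (B (t n (i + 1)) ω - B (t n i) ω) ^ 2 else 0) - C n|
        < min (1/(j+1 : ℝ)) T := by
    intro j
    set ε : ℝ := min (1/(j+1 : ℝ)) T with hεdef
    have hεpos : 0 < ε := lt_min (by positivity) hT
    have hεT : ε ≤ 2 * T := le_trans (min_le_right _ _) (by linarith)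
    set A : ℕ → Set Ω := fun n => {ω | ε ≤ |(∑ i ∈ Finset.range (N n),
        if t n i ≤ q then (B (t n (i + 1)) ω - B (t n i) ω) ^ 2 else 0) - C n|} with hAdef
    have hA : ∀ n, (ℙ : Measure Ω) (A n)
        ≤ ENNReal.ofReal (2 * Real.exp (-ε^2 / (16 * δ n * T))) := fun n =>
      qv_tail B hB T hT (N n) (t n) (hN n) (ht0 n) (htT n) (hmono n)
        (δ n) (hδpos n) (hδub n) q ε hεpos hεT
    -- eventual geometric bound
    obtain ⟨n₀, hn₀⟩ := Metric.tendsto_atTop.mp hmeshlog (ε^2 / (32 * T)) (by positivity)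
    set n₁ : ℕ := max n₀ 3 with hn₁def
    have hgeom : ∀ n, n₁ ≤ n → (ℙ : Measure Ω) (A n)
        ≤ ENNReal.ofReal (2 * (((n:ℝ))^2)⁻¹) := by
      intro n hn
      have hn3 : (3:ℕ) ≤ n := le_trans (le_max_right _ _) hn
      have hnR : (1:ℝ) < n := by exact_mod_cast lt_of_lt_of_le (by norm_num) hn3
      have hlogpos : 0 < Real.log n := Real.log_pos hnR
      have hd := hn₀ n (le_trans (le_max_left _ _) hn)
      rw [Real.dist_eq, sub_zero] at hd
      have hd2 : δ n * Real.log n < ε^2 / (32 * T) := lt_of_abs_lt hd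
      have hkey : 2 * Real.log n ≤ ε^2 / (16 * δ n * T) := by
        rw [le_div_iff₀ (mul_pos (mul_pos (by norm_num) (hδpos n)) hT)]
        calc 2 * Real.log n * (16 * δ n * T) = 32 * T * (δ n * Real.log n) := by ring
          _ ≤ 32 * T * (ε^2 / (32 * T)) := by
              apply mul_le_mul_of_nonneg_left hd2.le (by positivity)
          _ = ε^2 := by field_simp
      refine le_trans (hA n) (ENNReal.ofReal_le_ofReal ?_)
      have hexp : Real.exp (-ε^2 / (16 * δ n * T)) ≤ (((n:ℝ))^2)⁻¹ := by
        have h5 : -ε^2 / (16 * δ n * T) ≤ -(2 * Real.log n) := by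
          rw [neg_div]
          exact neg_le_neg hkey
        calc Real.exp (-ε^2 / (16 * δ n * T)) ≤ Real.exp (-(2 * Real.log n)) :=
              Real.exp_le_exp.mpr h5
          _ = (((n:ℝ))^2)⁻¹ := by
              rw [Real.exp_neg]
              congr 1
              rw [show (2:ℝ) * Real.log n = (2:ℕ) * Real.log n by norm_num,
                Real.exp_nat_mul, Real.exp_log (by positivity : (0:ℝ) < n)]
      linarith
    have hsum : (∑' n : ℕ, (ℙ : Measure Ω) (A n)) ≠ ⊤ := by
      have hle : ∀ n, (ℙ : Measure Ω) (A n)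
          ≤ (if n < n₁ then (1:ℝ≥0∞) else 0) + ENNReal.ofReal (2 * (((n:ℝ))^2)⁻¹) := by
        intro n
        by_cases h : n < n₁
        · rw [if_pos h]
          exact le_trans prob_le_one le_self_add
        · rw [if_neg h, zero_add]
          exact hgeom n (not_lt.mp h)
      have hpart1 : (∑' n : ℕ, (if n < n₁ then (1:ℝ≥0∞) else 0)) ≠ ⊤ := by
        rw [tsum_eq_sum (s := Finset.range n₁)
          (fun b hb => if_neg (by simpa using hb))]
        exact (ENNReal.sum_lt_top.mpr (fun a _ => by
          split_ifs <;> simp)).ne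
      have hsummable : Summable (fun n : ℕ => 2 * (((n:ℝ))^2)⁻¹) := by
        have h9 := Real.summable_one_div_nat_pow.mpr (by norm_num : 1 < 2)
        simpa [one_div] using h9.mul_left 2
      have hpart2 : (∑' n : ℕ, ENNReal.ofReal (2 * (((n:ℝ))^2)⁻¹)) ≠ ⊤ := by
        have h10 := ENNReal.ofReal_tsum_of_nonneg
          (f := fun n : ℕ => 2 * (((n:ℝ))^2)⁻¹) (fun n => by positivity) hsummable
        rw [← h10]
        exact ENNReal.ofReal_ne_top
      have hb2 : (∑' n : ℕ, (ℙ : Measure Ω) (A n))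
          ≤ (∑' n : ℕ, (if n < n₁ then (1:ℝ≥0∞) else 0))
              + ∑' n : ℕ, ENNReal.ofReal (2 * (((n:ℝ))^2)⁻¹) := by
        rw [← ENNReal.tsum_add]
        exact ENNReal.tsum_le_tsum hle
      exact ne_top_of_le_ne_top (ENNReal.add_ne_top.mpr ⟨hpart1, hpart2⟩) hb2
    have hfin := MeasureTheory.ae_finite_setOf_mem (μ := (ℙ : Measure Ω)) hsum
    filter_upwards [hfin] with ω hω
    obtain ⟨m, hm⟩ := hω.bddAbove
    rw [eventually_atTop]
    refine ⟨m+1, fun n hn => ?_⟩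
    by_contra hcon
    push_neg at hcon
    have h7 : n ∈ {k | ω ∈ A k} := hcon
    have h8 := hm h7
    omega
  have hae := ae_all_iff.mpr hBC
  filter_upwards [hae] with ω hω
  have hQC : Tendsto (fun n => (∑ i ∈ Finset.range (N n),
      if t n i ≤ q then (B (t n (i + 1)) ω - B (t n i) ω) ^ 2 else 0) - C n)
      atTop (nhds 0) := by
    rw [Metric.tendsto_atTop]
    intro ε hε
    obtain ⟨j, hj⟩ := exists_nat_one_div_lt hε
    obtain ⟨m, hm⟩ := eventually_atTop.mp (hω j)
    refine ⟨m, fun n hn => ?_⟩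
    rw [Real.dist_eq, sub_zero]
    calc |(∑ i ∈ Finset.range (N n),
          if t n i ≤ q then (B (t n (i + 1)) ω - B (t n i) ω) ^ 2 else 0) - C n|
        < min (1/(j+1 : ℝ)) T := hm n hn
      _ ≤ 1/(j+1 : ℝ) := min_le_left _ _
      _ < ε := hj
  simpa using hQC.add hC

/-- If `B` is a Brownian motion on `[0,T]` and `(π^n)` is a sequence of partitions
with `|π^n| log n → 0`, then almost surely, for all `s ∈ [0,T]`, the quadratic variation sums of
`B` along `π^n` up to `s` converge to `s`: `[B]^{(2)}_π(s) = s`. -/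
theorem brownian_quadratic_variation
    {Ω : Type*} [MeasureSpace Ω] (B : ℝ → Ω → ℝ) (hB : IsBrownianMotion B)
    (T : ℝ) (hT : 0 < T)
    (N : ℕ → ℕ) (t : ℕ → ℕ → ℝ)
    (hN : ∀ n, 0 < N n)
    (ht0 : ∀ n, t n 0 = 0) (htT : ∀ n, t n (N n) = T)
    (hmono : ∀ n, ∀ i < N n, t n i < t n (i + 1))
    (hmesh : ∀ ε > 0, ∃ M, ∀ n ≥ M, ∀ i < N n, t n (i + 1) - t n i < ε)
    (hmeshlog : Tendsto
      (fun n => (⨆ i : Fin (N n), (t n (i.1 + 1) - t n i.1)) * Real.log n) atTop (nhds 0)) :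
    ∀ᵐ ω ∂(ℙ : Measure Ω), ∀ s ∈ Icc 0 T,
      Tendsto (fun n => ∑ i ∈ Finset.range (N n),
        if t n i ≤ s then (B (t n (i + 1)) ω - B (t n i) ω) ^ 2 else 0) atTop (nhds s) := by
  haveI hP : IsProbabilityMeasure (ℙ : Measure Ω) := hB.1
  have hrat : ∀ᵐ ω ∂(ℙ : Measure Ω), ∀ r : ℚ, (r:ℝ) ∈ Icc (0:ℝ) T →
      Tendsto (fun n => ∑ i ∈ Finset.range (N n),
        if t n i ≤ (r:ℝ) then (B (t n (i + 1)) ω - B (t n i) ω) ^ 2 else 0)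
        atTop (nhds (r:ℝ)) := by
    rw [ae_all_iff]
    intro r
    by_cases hr : (r:ℝ) ∈ Icc (0:ℝ) T
    · exact (qv_as B hB T hT N t hN ht0 htT hmono hmesh hmeshlog (r:ℝ) hr.1 hr.2).mono
        (fun ω h _ => h)
    · filter_upwards with ω h
      exact absurd h hr
  have hTc := qv_as B hB T hT N t hN ht0 htT hmono hmesh hmeshlog T hT.le le_rfl
  filter_upwards [hrat, hTc] with ω hω hωT
  intro s hs
  have hmonoQ : ∀ (n : ℕ) (a b : ℝ), a ≤ b →
      (∑ i ∈ Finset.range (N n), if t n i ≤ a then (B (t n (i+1)) ω - B (t n i) ω)^2 else 0)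
      ≤ (∑ i ∈ Finset.range (N n), if t n i ≤ b then (B (t n (i+1)) ω - B (t n i) ω)^2 else 0) := by
    intro n a b hab
    apply Finset.sum_le_sum
    intro i _
    split_ifs with h1 h2
    · exact le_rfl
    · exact absurd (le_trans h1 hab) h2
    · positivity
    · exact le_rfl
  rw [Metric.tendsto_atTop]
  intro ε hε
  obtain ⟨q1, hq1s, hq1lb, hq1conv⟩ : ∃ q1 : ℝ, q1 ≤ s ∧ s - ε/2 ≤ q1 ∧
      Tendsto (fun n => ∑ i ∈ Finset.range (N n),
        if t n i ≤ q1 then (B (t n (i + 1)) ω - B (t n i) ω) ^ 2 else 0)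
        atTop (nhds q1) := by
    by_cases h : s - ε/2 < 0
    · refine ⟨0, hs.1, by linarith, ?_⟩
      have h0 := hω 0 (by simp [hT.le])
      simpa using h0
    · push_neg at h
      have hlt : s - ε/2 < s := by linarith
      obtain ⟨r, hr1, hr2⟩ := exists_rat_btwn hlt
      exact ⟨r, hr2.le, hr1.le, hω r ⟨by linarith, le_trans hr2.le hs.2⟩⟩
  obtain ⟨q2, hq2s, hq2ub, hq2conv⟩ : ∃ q2 : ℝ, s ≤ q2 ∧ q2 ≤ s + ε/2 ∧
      Tendsto (fun n => ∑ i ∈ Finset.range (N n),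
        if t n i ≤ q2 then (B (t n (i + 1)) ω - B (t n i) ω) ^ 2 else 0)
        atTop (nhds q2) := by
    by_cases h : T < s + ε/2
    · exact ⟨T, hs.2, h.le, hωT⟩
    · push_neg at h
      have hlt : s < s + ε/2 := by linarith
      obtain ⟨r, hr1, hr2⟩ := exists_rat_btwn hlt
      refine ⟨r, hr1.le, hr2.le, hω r ⟨le_trans hs.1 hr1.le, by linarith⟩⟩
  obtain ⟨m1, hm1⟩ := Metric.tendsto_atTop.mp hq1conv (ε/2) (by linarith)
  obtain ⟨m2, hm2⟩ := Metric.tendsto_atTop.mp hq2conv (ε/2) (by linarith)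
  refine ⟨max m1 m2, fun n hn => ?_⟩
  have l1 := hm1 n (le_trans (le_max_left _ _) hn)
  have l2 := hm2 n (le_trans (le_max_right _ _) hn)
  rw [Real.dist_eq] at l1 l2 ⊢
  rw [abs_lt] at l1 l2 ⊢
  have b1 := hmonoQ n q1 s hq1s
  have b2 := hmonoQ n s q2 hq2s
  constructor
  · linarith [l1.1]
  · linarith [l2.2]
end

section
/- Suppose x ∈ V^p_π([0,T],ℝ) with normalized p-th variation w(x,p,π)(t) = t for all t, and suppose for some q ≠ p the normalized q-th variation limit exists in [0,∞] for some t_0 ∈ (0,T]. If [x]^{(p)}_π(t_0) > 0 then w(x,q,π)(t_0) ∈ {0, ∞}: it cannot equal any value in (0,∞). -/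
open Filter Finset Set ENNReal

/-- Sharpness of the normalized variation statistic. If `x ∈ V^p_π` has normalized
`p`-th variation `w(x,p,π)(s) = s`, and for some `q ≠ p` the normalized `q`-th variation sums at
some `t₀ ∈ (0,T]` converge to a limit `ℓ ∈ [0,∞]`, then whenever `[x]^{(p)}_π(t₀) > 0` the limit
`ℓ` is `0` or `∞`: it cannot lie in `(0,∞)`. -/
theorem normalized_variation_dichotomy
    (T p q t₀ : ℝ) (hT : 0 < T) (hp : 1 < p) (hq1 : 1 ≤ q) (hqp : q ≠ p)
    (ht₀ : t₀ ∈ Ioc 0 T)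
    (x : ℝ → ℝ) (hx : ContinuousOn x (Icc 0 T))
    (N : ℕ → ℕ) (t : ℕ → ℕ → ℝ)
    (hN : ∀ n, 0 < N n)
    (ht0 : ∀ n, t n 0 = 0) (htT : ∀ n, t n (N n) = T)
    (hmono : ∀ n, ∀ i < N n, t n i < t n (i + 1))
    (hmesh : ∀ ε > 0, ∃ M, ∀ n ≥ M, ∀ i < N n, t n (i + 1) - t n i < ε)
    (V : ℝ → ℝ) (hVc : ContinuousOn V (Icc 0 T)) (hVm : MonotoneOn V (Icc 0 T))
    (hconv : ∀ s ∈ Icc 0 T,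
      Tendsto (fun n => ∑ i ∈ Finset.range (N n),
        if t n i ≤ s then |x (t n (i + 1)) - x (t n i)| ^ p else 0) atTop (nhds (V s)))
    -- normalized `p`-th variation of `x` is linear: `w(x,p,π)(s) = s`
    (hw : ∀ s ∈ Icc 0 T,
      Tendsto (fun n => ∑ i ∈ Finset.range (N n),
        if t n i ≤ s then
          |x (t n (i + 1)) - x (t n i)| ^ p / (V (t n (i + 1)) - V (t n i))
            * (t n (i + 1) - t n i)
        else 0) atTop (nhds s))
    -- `D a b` is the increment of the `q`-th variation of `x` over `[a,b]`, valued in `[0,∞]`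
    (D : ℝ → ℝ → ℝ≥0∞)
    (hD : ∀ a b, 0 ≤ a → a < b → b ≤ T →
      Tendsto (fun n => ∑ i ∈ Finset.range (N n),
        if a ≤ t n i ∧ t n (i + 1) ≤ b then
          ENNReal.ofReal (|x (t n (i + 1)) - x (t n i)| ^ q) else 0)
        atTop (nhds (D a b)))
    -- the normalized `q`-th variation sums at `t₀` converge to `ℓ ∈ [0,∞]`
    (ℓ : ℝ≥0∞)
    (hℓ : Tendsto (fun n => ∑ i ∈ Finset.range (N n),
        if t n i ≤ t₀ then
          ENNReal.ofReal (|x (t n (i + 1)) - x (t n i)| ^ q)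
            * ENNReal.ofReal (t n (i + 1) - t n i) / D (t n i) (t n (i + 1))
        else 0) atTop (nhds ℓ)) :
    0 < V t₀ → ℓ = 0 ∨ ℓ = ⊤ := by
  intro hV₀
  have hp0 : (0:ℝ) < p := lt_trans one_pos hp
  have hq0 : (0:ℝ) < q := lt_of_lt_of_le one_pos hq1
  -- monotonicity of partition points
  have hmono' : ∀ n, ∀ j ≤ N n, ∀ i ≤ j, t n i ≤ t n j := by
    intro n j
    induction j with
    | zero => intro _ i hi; simp [Nat.le_zero.mp hi]
    | succ j ih =>
      intro hj i hi
      have hjlt : j < N n := Nat.lt_of_lt_of_le (Nat.lt_succ_self j) hj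
      rcases eq_or_lt_of_le hi with h | h
      · rw [h]
      · exact le_trans (ih (le_of_lt hjlt) i (Nat.lt_succ_iff.mp h))
          (le_of_lt (hmono n j hjlt))
  have hpt : ∀ n, ∀ i ≤ N n, t n i ∈ Icc (0:ℝ) T := by
    intro n i hi
    constructor
    · rw [← ht0 n]; exact hmono' n i hi 0 (Nat.zero_le i)
    · rw [← htT n]; exact hmono' n (N n) le_rfl i hi
  -- oscillation control from uniform continuity
  have hosc : ∀ ε > (0:ℝ), ∃ M, ∀ n ≥ M, ∀ i < N n,
      |x (t n (i + 1)) - x (t n i)| < ε := by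
    intro ε hε
    have hux := isCompact_Icc.uniformContinuousOn_of_continuous hx
    rw [Metric.uniformContinuousOn_iff] at hux
    obtain ⟨δ, hδ, hδ'⟩ := hux ε hε
    obtain ⟨M, hM⟩ := hmesh δ hδ
    refine ⟨M, fun n hn i hi => ?_⟩
    have h1 := hpt n i (le_of_lt hi)
    have h2 := hpt n (i + 1) hi
    have hd : dist (t n (i+1)) (t n i) < δ := by
      rw [Real.dist_eq, abs_of_pos (sub_pos.mpr (hmono n i hi))]
      exact hM n hn i hi
    have := hδ' _ h2 _ h1 hd
    rwa [Real.dist_eq] at this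
  -- total p-variation sums tend to V T
  have hAT : Tendsto (fun n => ∑ i ∈ Finset.range (N n),
      |x (t n (i + 1)) - x (t n i)| ^ p) atTop (nhds (V T)) := by
    refine (hconv T ⟨le_of_lt hT, le_rfl⟩).congr (fun n => Finset.sum_congr rfl (fun i hi => ?_))
    rw [if_pos ((hpt n i (le_of_lt (Finset.mem_range.mp hi))).2)]
  have hVT : 0 ≤ V T :=
    ge_of_tendsto hAT (Eventually.of_forall fun n =>
      Finset.sum_nonneg fun i _ => Real.rpow_nonneg (abs_nonneg _) p)
  -- V is strictly increasing on [0,T]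
  have Vstrict : ∀ c d, 0 ≤ c → c < d → d ≤ T → V c < V d := by
    intro c d hc hcd hdT
    by_contra hVcd
    push_neg at hVcd
    have hcI : c ∈ Icc (0:ℝ) T := ⟨hc, le_trans (le_of_lt hcd) hdT⟩
    have hdI : d ∈ Icc (0:ℝ) T := ⟨le_trans hc (le_of_lt hcd), hdT⟩
    have hVconst : ∀ s ∈ Icc c d, V s = V c := by
      intro s hs
      have hsI : s ∈ Icc (0:ℝ) T := ⟨le_trans hc hs.1, le_trans hs.2 hdT⟩
      exact le_antisymm (le_trans (hVm hsI hdI hs.2) hVcd) (hVm hcI hsI hs.1)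
    set e : ℝ := (d - c)/3 with he
    have he0 : 0 < e := div_pos (sub_pos.mpr hcd) (by norm_num)
    have hs₁ : c + e ∈ Icc (0:ℝ) T := ⟨by linarith, by
      have : c + e ≤ d := by rw [he]; linarith
      linarith⟩
    have hs₂ : c + 2*e ∈ Icc (0:ℝ) T := ⟨by linarith, by
      have : c + 2*e ≤ d := by rw [he]; linarith
      linarith⟩
    obtain ⟨M, hM⟩ := hmesh e he0
    have hkey : ∀ n ≥ M, (∑ i ∈ Finset.range (N n),
        if t n i ≤ c + 2*e then
          |x (t n (i + 1)) - x (t n i)| ^ p / (V (t n (i + 1)) - V (t n i))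
            * (t n (i + 1) - t n i) else 0)
        = (∑ i ∈ Finset.range (N n),
        if t n i ≤ c + e then
          |x (t n (i + 1)) - x (t n i)| ^ p / (V (t n (i + 1)) - V (t n i))
            * (t n (i + 1) - t n i) else 0) := by
      intro n hn
      refine Finset.sum_congr rfl fun i hi => ?_
      have hiN := Finset.mem_range.mp hi
      rcases le_or_gt (t n i) (c + e) with h1 | h1
      · rw [if_pos h1, if_pos (le_trans h1 (by linarith))]
      · rcases le_or_gt (t n i) (c + 2*e) with h2 | h2
        · rw [if_neg (not_le.mpr h1), if_pos h2]
          have hΔ := hM n hn i hiN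
          have hmi := hmono n i hiN
          have hed : c + 3*e = d := by rw [he]; ring
          have hv1 : V (t n i) = V c := hVconst _ ⟨by linarith, by linarith⟩
          have hv2 : V (t n (i+1)) = V c := hVconst _ ⟨by linarith, by linarith⟩
          rw [hv1, hv2, sub_self, _root_.div_zero, zero_mul]
        · rw [if_neg (not_le.mpr h1), if_neg (not_le.mpr h2)]
    have h1 := hw (c+e) hs₁
    have h2 : Tendsto (fun n => ∑ i ∈ Finset.range (N n),
        if t n i ≤ c + e then
          |x (t n (i + 1)) - x (t n i)| ^ p / (V (t n (i + 1)) - V (t n i))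
            * (t n (i + 1) - t n i) else 0) atTop (nhds (c + 2*e)) :=
      Tendsto.congr' (eventually_atTop.mpr ⟨M, hkey⟩) (hw (c+2*e) hs₂)
    have := tendsto_nhds_unique h1 h2
    linarith
  rcases lt_or_gt_of_ne hqp with hlt | hgt
  · -- q < p : every D is ⊤, so all normalized terms vanish
    have Dtop : ∀ a b, 0 ≤ a → a < b → b ≤ T → D a b = ⊤ := by
      intro a b ha hab hbT
      have hVab : 0 < V b - V a := sub_pos.mpr (Vstrict a b ha hab hbT)
      set c : ℝ := (V b - V a)/4 with hcdef
      have hc : 0 < c := by positivity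
      have hRtop : Tendsto (fun n => ∑ i ∈ Finset.range (N n),
          if a ≤ t n i ∧ t n (i+1) ≤ b then |x (t n (i + 1)) - x (t n i)| ^ q else 0)
          atTop atTop := by
        rw [tendsto_atTop]
        intro C
        set C' : ℝ := max C 1 with hC'def
        have hC'0 : (0:ℝ) < C' := lt_of_lt_of_le one_pos (le_max_right _ _)
        have hpq : (0:ℝ) < p - q := sub_pos.mpr hlt
        have hmin0 : (0:ℝ) < min (c / C') 1 := lt_min (div_pos hc hC'0) one_pos
        set ε₁ : ℝ := (min (c / C') 1) ^ (1/(p - q)) with hε₁def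
        have hε₁0 : 0 < ε₁ := Real.rpow_pos_of_pos hmin0 _
        have hε₁pow : ε₁ ^ (p - q) = min (c/C') 1 := by
          rw [hε₁def, ← Real.rpow_mul (le_of_lt hmin0), one_div,
            inv_mul_cancel₀ (ne_of_gt hpq), Real.rpow_one]
        set ε₂ : ℝ := c ^ (1/p) with hε₂def
        have hε₂0 : 0 < ε₂ := Real.rpow_pos_of_pos hc _
        have hε₂pow : ε₂ ^ p = c := by
          rw [hε₂def, ← Real.rpow_mul (le_of_lt hc), one_div,
            inv_mul_cancel₀ (ne_of_gt hp0), Real.rpow_one]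
        set ε : ℝ := min ε₁ ε₂ with hεdef
        have hε0 : 0 < ε := lt_min hε₁0 hε₂0
        obtain ⟨M₁, hM₁⟩ := hosc ε hε0
        have hdiff := (hconv b ⟨le_trans ha (le_of_lt hab), hbT⟩).sub
          (hconv a ⟨ha, le_trans (le_of_lt hab) hbT⟩)
        have hev : ∀ᶠ n in atTop, 2*c < (∑ i ∈ Finset.range (N n),
              if t n i ≤ b then |x (t n (i + 1)) - x (t n i)| ^ p else 0)
            - (∑ i ∈ Finset.range (N n),
              if t n i ≤ a then |x (t n (i + 1)) - x (t n i)| ^ p else 0) :=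
          hdiff.eventually (eventually_gt_nhds (by rw [hcdef]; linarith))
        obtain ⟨M₂, hM₂⟩ := eventually_atTop.mp hev
        refine eventually_atTop.mpr ⟨max M₁ M₂, fun n hn => ?_⟩
        have hn₁ : n ≥ M₁ := le_trans (le_max_left _ _) hn
        have hn₂ : n ≥ M₂ := le_trans (le_max_right _ _) hn
        -- split of the p-variation difference
        have hsplit : (∑ i ∈ Finset.range (N n),
              if t n i ≤ b then |x (t n (i + 1)) - x (t n i)| ^ p else 0)
            - (∑ i ∈ Finset.range (N n),
              if t n i ≤ a then |x (t n (i + 1)) - x (t n i)| ^ p else 0)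
            ≤ (∑ i ∈ Finset.range (N n),
              if a ≤ t n i ∧ t n (i+1) ≤ b then |x (t n (i + 1)) - x (t n i)| ^ p else 0)
            + (∑ i ∈ Finset.range (N n),
              if t n i ≤ b ∧ b < t n (i+1) then |x (t n (i + 1)) - x (t n i)| ^ p else 0) := by
          rw [← Finset.sum_sub_distrib, ← Finset.sum_add_distrib]
          refine Finset.sum_le_sum fun i hi => ?_
          have hw0 : (0:ℝ) ≤ |x (t n (i + 1)) - x (t n i)| ^ p :=
            Real.rpow_nonneg (abs_nonneg _) p
          have h3nn : (0:ℝ) ≤ (if a ≤ t n i ∧ t n (i+1) ≤ b then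
              |x (t n (i + 1)) - x (t n i)| ^ p else 0) := by split_ifs <;> simp [hw0]
          have h4nn : (0:ℝ) ≤ (if t n i ≤ b ∧ b < t n (i+1) then
              |x (t n (i + 1)) - x (t n i)| ^ p else 0) := by split_ifs <;> simp [hw0]
          rcases le_or_gt (t n i) a with h2 | h2
          · rw [if_pos h2, if_pos (le_trans h2 (le_of_lt hab)), sub_self]
            exact add_nonneg h3nn h4nn
          · rw [if_neg (not_le.mpr h2), sub_zero]
            rcases le_or_gt (t n i) b with h1 | h1
            · rw [if_pos h1]
              rcases le_or_gt (t n (i+1)) b with h3 | h3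
              · rw [if_pos (⟨le_of_lt h2, h3⟩ : a ≤ t n i ∧ t n (i+1) ≤ b)]
                linarith
              · rw [if_pos (⟨h1, h3⟩ : t n i ≤ b ∧ b < t n (i+1))]
                linarith
            · rw [if_neg (not_le.mpr h1)]
              exact add_nonneg h3nn h4nn
        -- bound on the boundary term
        have hbad : (∑ i ∈ Finset.range (N n),
            if t n i ≤ b ∧ b < t n (i+1) then |x (t n (i + 1)) - x (t n i)| ^ p else 0) ≤ c := by
          rw [Finset.sum_ite, Finset.sum_const_zero, add_zero]
          have hcard : ((Finset.range (N n)).filter (fun i => t n i ≤ b ∧ b < t n (i+1))).card ≤ 1 := by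
            rw [Finset.card_le_one]
            intro i hi j hj
            simp only [Finset.mem_filter, Finset.mem_range] at hi hj
            by_contra hne
            rcases Nat.lt_or_ge i j with hij | hij
            · have : t n (i+1) ≤ t n j := hmono' n j (le_of_lt hj.1) (i+1) hij
              linarith [hi.2.2, hj.2.1]
            · have hij' : j < i := lt_of_le_of_ne hij (Ne.symm hne)
              have : t n (j+1) ≤ t n i := hmono' n i (le_of_lt hi.1) (j+1) hij'
              linarith [hj.2.2, hi.2.1]
          have hbound : ∀ i ∈ (Finset.range (N n)).filter (fun i => t n i ≤ b ∧ b < t n (i+1)),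
              |x (t n (i + 1)) - x (t n i)| ^ p ≤ c := by
            intro i hi
            simp only [Finset.mem_filter, Finset.mem_range] at hi
            have hlt' : |x (t n (i + 1)) - x (t n i)| < ε := hM₁ n hn₁ i hi.1
            calc |x (t n (i + 1)) - x (t n i)| ^ p ≤ ε₂ ^ p :=
                  Real.rpow_le_rpow (abs_nonneg _)
                    (le_trans (le_of_lt hlt') (min_le_right _ _)) (le_of_lt hp0)
              _ = c := hε₂pow
          calc (∑ i ∈ (Finset.range (N n)).filter (fun i => t n i ≤ b ∧ b < t n (i+1)),
                |x (t n (i + 1)) - x (t n i)| ^ p)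
              ≤ ((Finset.range (N n)).filter (fun i => t n i ≤ b ∧ b < t n (i+1))).card • c :=
                Finset.sum_le_card_nsmul _ _ _ hbound
            _ ≤ 1 * c := by
                rw [nsmul_eq_mul]
                exact mul_le_mul_of_nonneg_right (by exact_mod_cast Nat.cast_le.mpr hcard) (le_of_lt hc)
            _ = c := one_mul c
        have hP : c ≤ (∑ i ∈ Finset.range (N n),
            if a ≤ t n i ∧ t n (i+1) ≤ b then |x (t n (i + 1)) - x (t n i)| ^ p else 0) := by
          have := hM₂ n hn₂
          linarith
        -- p-sum controlled by q-sum
        have hPR : (∑ i ∈ Finset.range (N n),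
              if a ≤ t n i ∧ t n (i+1) ≤ b then |x (t n (i + 1)) - x (t n i)| ^ p else 0)
            ≤ ε₁ ^ (p - q) * (∑ i ∈ Finset.range (N n),
              if a ≤ t n i ∧ t n (i+1) ≤ b then |x (t n (i + 1)) - x (t n i)| ^ q else 0) := by
          rw [Finset.mul_sum]
          refine Finset.sum_le_sum fun i hi => ?_
          have hiN := Finset.mem_range.mp hi
          split_ifs with g
          · rcases eq_or_lt_of_le (abs_nonneg (x (t n (i + 1)) - x (t n i))) with h0 | h0
            · rw [← h0, Real.zero_rpow (ne_of_gt hp0), Real.zero_rpow (ne_of_gt hq0), mul_zero]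
            · have hlt' : |x (t n (i + 1)) - x (t n i)| < ε₁ :=
                lt_of_lt_of_le (hM₁ n hn₁ i hiN) (min_le_left _ _)
              have : |x (t n (i + 1)) - x (t n i)| ^ p
                  = |x (t n (i + 1)) - x (t n i)| ^ (p - q) * |x (t n (i + 1)) - x (t n i)| ^ q := by
                rw [← Real.rpow_add h0]; ring_nf
              rw [this]
              exact mul_le_mul_of_nonneg_right
                (Real.rpow_le_rpow (abs_nonneg _) (le_of_lt hlt') (le_of_lt hpq))
                (Real.rpow_nonneg (abs_nonneg _) q)
          · simp
        -- conclude
        have hRn0 : 0 ≤ (∑ i ∈ Finset.range (N n),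
            if a ≤ t n i ∧ t n (i+1) ≤ b then |x (t n (i + 1)) - x (t n i)| ^ q else 0) :=
          Finset.sum_nonneg fun i _ => by positivity
        have hchain : c ≤ (c/C') * (∑ i ∈ Finset.range (N n),
            if a ≤ t n i ∧ t n (i+1) ≤ b then |x (t n (i + 1)) - x (t n i)| ^ q else 0) := by
          calc c ≤ ε₁ ^ (p - q) * _ := le_trans hP hPR
            _ ≤ (c/C') * _ := mul_le_mul_of_nonneg_right
                (by rw [hε₁pow]; exact min_le_left _ _) hRn0
        have hcc : (c/C') * C' = c := div_mul_cancel₀ c (ne_of_gt hC'0)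
        have h' : (c/C') * C' ≤ (c/C') * (∑ i ∈ Finset.range (N n),
            if a ≤ t n i ∧ t n (i+1) ≤ b then |x (t n (i + 1)) - x (t n i)| ^ q else 0) := by
          rw [hcc]; exact hchain
        have := le_of_mul_le_mul_left h' (div_pos hc hC'0)
        exact le_trans (le_max_left C 1) this
      have hQ : Tendsto (fun n => ∑ i ∈ Finset.range (N n),
          if a ≤ t n i ∧ t n (i + 1) ≤ b then
            ENNReal.ofReal (|x (t n (i + 1)) - x (t n i)| ^ q) else 0)
          atTop (nhds ⊤) := by
        refine Tendsto.congr (fun n => ?_) (ENNReal.tendsto_ofReal_atTop.comp hRtop)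
        show ENNReal.ofReal _ = _
        rw [ENNReal.ofReal_sum_of_nonneg (fun i _ => by positivity)]
        exact Finset.sum_congr rfl fun i _ => by split_ifs <;> simp
      exact tendsto_nhds_unique (hD a b ha hab hbT) hQ
    left
    have hzero : ∀ n, (∑ i ∈ Finset.range (N n),
        if t n i ≤ t₀ then
          ENNReal.ofReal (|x (t n (i + 1)) - x (t n i)| ^ q)
            * ENNReal.ofReal (t n (i + 1) - t n i) / D (t n i) (t n (i + 1))
        else 0) = 0 := by
      intro n
      refine Finset.sum_eq_zero fun i hi => ?_
      have hiN := Finset.mem_range.mp hi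
      split_ifs with h
      · rw [Dtop (t n i) (t n (i+1)) (hpt n i (le_of_lt hiN)).1 (hmono n i hiN)
          (hpt n (i+1) hiN).2, ENNReal.div_top]
      · rfl
    exact tendsto_nhds_unique (Tendsto.congr hzero hℓ) tendsto_const_nhds
  · -- q > p : every D is 0, so sums are eventually ⊤
    have Dzero : ∀ a b, 0 ≤ a → a < b → b ≤ T → D a b = 0 := by
      intro a b ha hab hbT
      have hqp' : (0:ℝ) < q - p := sub_pos.mpr hgt
      set B : ℝ := V T + 1 with hBdef
      have hB : 0 < B := by rw [hBdef]; linarith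
      -- total q-variation sums tend to 0
      have hRz : Tendsto (fun n => ∑ i ∈ Finset.range (N n),
          |x (t n (i + 1)) - x (t n i)| ^ q) atTop (nhds 0) := by
        rw [Metric.tendsto_atTop]
        intro ε' hε'
        have hx0 : (0:ℝ) < ε'/(2*B) := by positivity
        set ε : ℝ := min 1 ((ε' / (2*B)) ^ (1/(q-p))) with hεdef
        have hε0 : 0 < ε := lt_min one_pos (Real.rpow_pos_of_pos hx0 _)
        have hεpow : ε ^ (q-p) ≤ ε'/(2*B) := by
          calc ε ^ (q-p) ≤ ((ε'/(2*B)) ^ (1/(q-p))) ^ (q-p) :=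
                Real.rpow_le_rpow (le_of_lt hε0) (min_le_right _ _) (le_of_lt hqp')
            _ = ε'/(2*B) := by
                rw [← Real.rpow_mul (le_of_lt hx0), one_div,
                  inv_mul_cancel₀ (ne_of_gt hqp'), Real.rpow_one]
        obtain ⟨M₁, hM₁⟩ := hosc ε hε0
        have hevA : ∀ᶠ n in atTop, (∑ i ∈ Finset.range (N n),
            |x (t n (i + 1)) - x (t n i)| ^ p) < B :=
          hAT.eventually (eventually_lt_nhds (by rw [hBdef]; linarith))
        obtain ⟨M₂, hM₂⟩ := eventually_atTop.mp hevA
        refine ⟨max M₁ M₂, fun n hn => ?_⟩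
        have hn₁ : n ≥ M₁ := le_trans (le_max_left _ _) hn
        have hn₂ : n ≥ M₂ := le_trans (le_max_right _ _) hn
        have hR0 : 0 ≤ (∑ i ∈ Finset.range (N n), |x (t n (i + 1)) - x (t n i)| ^ q) :=
          Finset.sum_nonneg fun i _ => Real.rpow_nonneg (abs_nonneg _) q
        have hle : (∑ i ∈ Finset.range (N n), |x (t n (i + 1)) - x (t n i)| ^ q)
            ≤ ε ^ (q-p) * (∑ i ∈ Finset.range (N n), |x (t n (i + 1)) - x (t n i)| ^ p) := by
          rw [Finset.mul_sum]
          refine Finset.sum_le_sum fun i hi => ?_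
          have hiN := Finset.mem_range.mp hi
          rcases eq_or_lt_of_le (abs_nonneg (x (t n (i + 1)) - x (t n i))) with h0 | h0
          · rw [← h0, Real.zero_rpow (ne_of_gt hq0), Real.zero_rpow (ne_of_gt hp0), mul_zero]
          · have hlt' : |x (t n (i + 1)) - x (t n i)| < ε := hM₁ n hn₁ i hiN
            have heq : |x (t n (i + 1)) - x (t n i)| ^ q
                = |x (t n (i + 1)) - x (t n i)| ^ (q - p) * |x (t n (i + 1)) - x (t n i)| ^ p := by
              rw [← Real.rpow_add h0]; ring_nf
            rw [heq]
            exact mul_le_mul_of_nonneg_right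
              (Real.rpow_le_rpow (abs_nonneg _) (le_of_lt hlt') (le_of_lt hqp'))
              (Real.rpow_nonneg (abs_nonneg _) p)
        have hfin : (∑ i ∈ Finset.range (N n), |x (t n (i + 1)) - x (t n i)| ^ q)
            ≤ (ε'/(2*B)) * B := by
          calc (∑ i ∈ Finset.range (N n), |x (t n (i + 1)) - x (t n i)| ^ q)
              ≤ ε ^ (q-p) * (∑ i ∈ Finset.range (N n), |x (t n (i + 1)) - x (t n i)| ^ p) := hle
            _ ≤ (ε'/(2*B)) * B := by
                have h1 : 0 ≤ (∑ i ∈ Finset.range (N n), |x (t n (i + 1)) - x (t n i)| ^ p) :=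
                  Finset.sum_nonneg fun i _ => Real.rpow_nonneg (abs_nonneg _) p
                have h2 : (∑ i ∈ Finset.range (N n), |x (t n (i + 1)) - x (t n i)| ^ p) ≤ B :=
                  le_of_lt (hM₂ n hn₂)
                have h3 : 0 ≤ ε ^ (q - p) := Real.rpow_nonneg (le_of_lt hε0) _
                nlinarith
        rw [Real.dist_eq, sub_zero, abs_of_nonneg hR0]
        have : (ε'/(2*B)) * B = ε'/2 := by field_simp
        rw [this] at hfin
        linarith
      have hQz : Tendsto (fun n => ∑ i ∈ Finset.range (N n),
          if a ≤ t n i ∧ t n (i + 1) ≤ b then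
            ENNReal.ofReal (|x (t n (i + 1)) - x (t n i)| ^ q) else 0)
          atTop (nhds 0) := by
        have hle : ∀ n, (∑ i ∈ Finset.range (N n),
            if a ≤ t n i ∧ t n (i + 1) ≤ b then
              ENNReal.ofReal (|x (t n (i + 1)) - x (t n i)| ^ q) else 0)
            ≤ ENNReal.ofReal (∑ i ∈ Finset.range (N n), |x (t n (i + 1)) - x (t n i)| ^ q) := by
          intro n
          rw [ENNReal.ofReal_sum_of_nonneg (fun i _ => Real.rpow_nonneg (abs_nonneg _) q)]
          refine Finset.sum_le_sum fun i _ => ?_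
          split_ifs
          · exact le_rfl
          · exact zero_le
        have h2 : Tendsto (fun n => ENNReal.ofReal (∑ i ∈ Finset.range (N n),
            |x (t n (i + 1)) - x (t n i)| ^ q)) atTop (nhds 0) := by
          have := ENNReal.tendsto_ofReal hRz
          simpa using this
        exact tendsto_of_tendsto_of_tendsto_of_le_of_le tendsto_const_nhds h2
          (fun n => zero_le) hle
      exact tendsto_nhds_unique (hD a b ha hab hbT) hQz
    right
    have hAt := hconv t₀ ⟨le_of_lt ht₀.1, ht₀.2⟩
    have hev : ∀ᶠ n in atTop, 0 < ∑ i ∈ Finset.range (N n),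
        if t n i ≤ t₀ then |x (t n (i + 1)) - x (t n i)| ^ p else 0 :=
      hAt.eventually (eventually_gt_nhds hV₀)
    have hSev : ∀ᶠ n in atTop, (∑ i ∈ Finset.range (N n),
        if t n i ≤ t₀ then
          ENNReal.ofReal (|x (t n (i + 1)) - x (t n i)| ^ q)
            * ENNReal.ofReal (t n (i + 1) - t n i) / D (t n i) (t n (i + 1))
        else 0) = ⊤ := by
      refine hev.mono fun n hpos => ?_
      obtain ⟨i, hi, hne⟩ := Finset.exists_ne_zero_of_sum_ne_zero (ne_of_gt hpos)
      have hiN := Finset.mem_range.mp hi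
      have hcond : t n i ≤ t₀ := by
        by_contra h
        rw [if_neg h] at hne
        exact hne rfl
      rw [if_pos hcond] at hne
      have hΔ : x (t n (i+1)) ≠ x (t n i) := by
        intro h
        exact hne (by rw [h, sub_self, abs_zero, Real.zero_rpow (ne_of_gt hp0)])
      have hΔpos : 0 < |x (t n (i+1)) - x (t n i)| := abs_pos.mpr (sub_ne_zero.mpr hΔ)
      have hterm : (if t n i ≤ t₀ then
          ENNReal.ofReal (|x (t n (i + 1)) - x (t n i)| ^ q)
            * ENNReal.ofReal (t n (i + 1) - t n i) / D (t n i) (t n (i + 1))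
        else 0) = ⊤ := by
        rw [if_pos hcond, Dzero (t n i) (t n (i+1)) (hpt n i (le_of_lt hiN)).1
          (hmono n i hiN) (hpt n (i+1) hiN).2]
        refine ENNReal.div_zero (mul_ne_zero ?_ ?_)
        · exact (ENNReal.ofReal_pos.mpr (Real.rpow_pos_of_pos hΔpos q)).ne'
        · exact (ENNReal.ofReal_pos.mpr (sub_pos.mpr (hmono n i hiN))).ne'
      refine top_unique (le_trans (le_of_eq hterm.symm) ?_)
      exact Finset.single_le_sum (f := fun j => if t n j ≤ t₀ then
          ENNReal.ofReal (|x (t n (j + 1)) - x (t n j)| ^ q)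
            * ENNReal.ofReal (t n (j + 1) - t n j) / D (t n j) (t n (j + 1))
        else 0) (fun j _ => zero_le) hi
    exact (tendsto_nhds_unique (Tendsto.congr' hSev hℓ) tendsto_const_nhds).symm.symm
end
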